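/- Define F(v) = Σ over quadruples (k₁,k₂,k₃,k₄) ∈ ℕ⁴ with k₁−k₂+k₃−k₄ = 0 of f_{k₁,k₂,k₃,k₄}·v_{k₁}·conj(v_{k₂})·v_{k₃}·conj(v_{k₄}), and define X_F(v) to be the sequence with n-th entry X_F(v)(n) = −4i·Σ over (k₁,k₂,k₃) ∈ ℕ³ with k₁−k₂+k₃ = n of f_{k₁,k₂,k₃,n}·v_{k₁}·conj(v_{k₂})·v_{k₃}. Then for every s > 1/2 there exists a constant C_s > 0 such that for all v, h ∈ H^s₊: (i) the series defining F(v) converges absolutely, F(v) is a real number, and |F(v)| ≤ C_s‖v‖_{H^s}⁴; (ii) X_F(v) ∈ H^s₊ with ‖X_F(v)‖_{H^s} ≤ C_s‖v‖_{H^s}³; (iii) the map X_F : H^s₊ → H^s₊ is differentiable and its derivative satisfies ‖dX_F(v)‖ ≤ C_s‖v‖_{H^s}² in operator norm on H^s₊. -/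

import Mathlib

/-- Squared `H^s` norm of a sequence of Fourier coefficients. -/
noncomputable def hsNormSq (s : ℝ) (v : ℕ → ℂ) : ℝ :=
  ∑' k : ℕ, (1 + (k : ℝ) ^ 2) ^ s * ‖v k‖ ^ 2

/-- `H^s` norm of a sequence of Fourier coefficients. -/
noncomputable def hsNorm (s : ℝ) (v : ℕ → ℂ) : ℝ :=
  Real.sqrt (hsNormSq s v)

/-- Membership in `H^s₊`. -/
def InHs (s : ℝ) (v : ℕ → ℂ) : Prop :=
  Summable fun k : ℕ => (1 + (k : ℝ) ^ 2) ^ s * ‖v k‖ ^ 2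

/-- The `k`-th Fourier coefficient of `Π(|v|²v)`:
the sum over `k₁ - k₂ + k₃ = k` of `v_{k₁} * conj v_{k₂} * v_{k₃}`. -/
noncomputable def cubicTerm (v : ℕ → ℂ) (k : ℕ) : ℂ :=
  ∑' p : ℕ × ℕ × ℕ,
    if p.1 + p.2.2 = k + p.2.1 then v p.1 * (starRingEnd ℂ) (v p.2.1) * v p.2.2 else 0

/-- Absolute convergence of the sum defining `cubicTerm v k`. -/
def CubicSummable (v : ℕ → ℂ) (k : ℕ) : Prop :=
  Summable fun p : ℕ × ℕ × ℕ =>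
    ‖if p.1 + p.2.2 = k + p.2.1 then v p.1 * (starRingEnd ℂ) (v p.2.1) * v p.2.2 else 0‖

/-- Continuity of `t ↦ u(t)` as a curve with values in `H^s₊`. -/
def HsContinuous (s : ℝ) (u : ℝ → ℕ → ℂ) : Prop :=
  ∀ t₀ : ℝ, ∀ δ : ℝ, 0 < δ → ∃ η > 0, ∀ t : ℝ, |t - t₀| < η →
    hsNorm s (fun k => u t k - u t₀ k) < δ

/-- `u ∈ C(ℝ, H^s₊)` is a solution of the NLS–Szegő equation
`i ∂ₜ u + ε^α ∂ₓ² u = Π(|u|²u)`, written on Fourier coefficients. -/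
def IsSolutionNLSSzego (s ε α : ℝ) (u : ℝ → ℕ → ℂ) : Prop :=
  (∀ t : ℝ, InHs s (u t)) ∧ HsContinuous s u ∧
  ∀ t : ℝ, ∀ k : ℕ, CubicSummable (u t) k ∧
    HasDerivAt (fun τ : ℝ => u τ k)
      (-Complex.I * (((ε ^ α * (k : ℝ) ^ 2 : ℝ) : ℂ) * u t k + cubicTerm (u t) k)) t

/-- The coefficients `f_{k₁,k₂,k₃,k₄}` of the Birkhoff auxiliary functional `F`. -/
noncomputable def fCoef (k₁ k₂ k₃ k₄ : ℕ) : ℂ :=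
  if ((k₁ : ℤ) ^ 2 - (k₂ : ℤ) ^ 2 + (k₃ : ℤ) ^ 2 - (k₄ : ℤ) ^ 2) = 0 then 0
  else Complex.I /
    (4 * (((k₁ : ℤ) ^ 2 - (k₂ : ℤ) ^ 2 + (k₃ : ℤ) ^ 2 - (k₄ : ℤ) ^ 2 : ℤ) : ℂ))

/-- The Hamiltonian vector field `X_F` of `F`:
`X_F(v)(n) = -4i Σ_{k₁-k₂+k₃=n} f_{k₁,k₂,k₃,n} v_{k₁} conj(v_{k₂}) v_{k₃}`. -/
noncomputable def XF (v : ℕ → ℂ) : ℕ → ℂ := fun n =>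
  (-4) * Complex.I *
    ∑' p : ℕ × ℕ × ℕ,
      if p.1 + p.2.2 = n + p.2.1 then
        fCoef p.1 p.2.1 p.2.2 n * v p.1 * (starRingEnd ℂ) (v p.2.1) * v p.2.2
      else 0

/-- Elementary formulation of (Fréchet) differentiability of a map
`Φ : H^s₊ → H^s₊` at `v`, with an `ℝ`-linear derivative `D` of operator norm
at most `B`. -/
def HasHsDerivAt (s : ℝ) (Φ : (ℕ → ℂ) → ℕ → ℂ) (v : ℕ → ℂ)
    (D : (ℕ → ℂ) → ℕ → ℂ) (B : ℝ) : Prop :=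
  (∀ h₁ h₂ : ℕ → ℂ, InHs s h₁ → InHs s h₂ →
    ∀ k, D (fun j => h₁ j + h₂ j) k = D h₁ k + D h₂ k) ∧
  (∀ (c : ℝ) (h : ℕ → ℂ), InHs s h →
    ∀ k, D (fun j => (c : ℂ) * h j) k = (c : ℂ) * D h k) ∧
  (∀ h : ℕ → ℂ, InHs s h → InHs s (D h) ∧ hsNorm s (D h) ≤ B * hsNorm s h) ∧
  (∀ η : ℝ, 0 < η → ∃ r > 0, ∀ h : ℕ → ℂ, InHs s h → hsNorm s h < r →
    hsNorm s (fun k => Φ (fun j => v j + h j) k - Φ v k - D h k) ≤ η * hsNorm s h)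

/-- The functional `F(v) = Σ_{k₁-k₂+k₃-k₄=0} f_{k₁,k₂,k₃,k₄} v_{k₁} conj(v_{k₂}) v_{k₃} conj(v_{k₄})`. -/
noncomputable def Ffun (v : ℕ → ℂ) : ℂ :=
  ∑' q : ℕ × ℕ × ℕ × ℕ,
    if q.1 + q.2.2.1 = q.2.1 + q.2.2.2 then
      fCoef q.1 q.2.1 q.2.2.1 q.2.2.2 * v q.1 * (starRingEnd ℂ) (v q.2.1) * v q.2.2.1 *
        (starRingEnd ℂ) (v q.2.2.2)
    else 0

/-- Absolute convergence of the series defining `F(v)`. -/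
def FfunSummable (v : ℕ → ℂ) : Prop :=
  Summable fun q : ℕ × ℕ × ℕ × ℕ =>
    ‖if q.1 + q.2.2.1 = q.2.1 + q.2.2.2 then
      fCoef q.1 q.2.1 q.2.2.1 q.2.2.2 * v q.1 * (starRingEnd ℂ) (v q.2.1) * v q.2.2.1 *
        (starRingEnd ℂ) (v q.2.2.2)
    else 0‖

namespace St12

noncomputable def w (s : ℝ) (k : ℕ) : ℝ := (1 + (k : ℝ) ^ 2) ^ s
noncomputable def sw (s : ℝ) (k : ℕ) : ℝ := Real.sqrt (w s k)

lemma one_le_base (k : ℕ) : (1 : ℝ) ≤ 1 + (k : ℝ) ^ 2 := by nlinarith [sq_nonneg (k:ℝ)]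
lemma w_pos (s : ℝ) (k : ℕ) : 0 < w s k :=
  Real.rpow_pos_of_pos (by positivity) s
lemma one_le_w {s : ℝ} (hs : 0 ≤ s) (k : ℕ) : 1 ≤ w s k :=
  Real.one_le_rpow (one_le_base k) hs
lemma sw_nonneg (s : ℝ) (k : ℕ) : 0 ≤ sw s k := Real.sqrt_nonneg _
lemma sw_sq (s : ℝ) (k : ℕ) : sw s k ^ 2 = w s k := Real.sq_sqrt (w_pos s k).le
lemma one_le_sw {s : ℝ} (hs : 0 ≤ s) (k : ℕ) : 1 ≤ sw s k := by
  rw [show (1:ℝ) = Real.sqrt 1 by simp [Real.sqrt_one]]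
  exact Real.sqrt_le_sqrt (one_le_w hs k)

lemma summable_winv {s : ℝ} (hs : 1 / 2 < s) : Summable fun k : ℕ => (w s k)⁻¹ := by
  have hs0 : (0:ℝ) ≤ s := by linarith
  have h1 : Summable fun k : ℕ => (((k : ℝ)) ^ (2 * s))⁻¹ :=
    Real.summable_nat_rpow_inv.2 (by linarith)
  have h2 : Summable fun k : ℕ => ((((k+1) : ℕ) : ℝ) ^ (2 * s))⁻¹ :=
    (summable_nat_add_iff 1).2 h1
  have h3 : Summable fun k : ℕ => (w s (k + 1))⁻¹ := by
    refine h2.of_nonneg_of_le (fun k => inv_nonneg.2 (w_pos s (k+1)).le) (fun k => ?_)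
    have hb : (((k+1:ℕ):ℝ)) ^ (2 * s) ≤ w s (k+1) := by
      rw [w]
      have : (((k+1:ℕ):ℝ)) ^ (2*s) = ((((k+1:ℕ):ℝ)) ^ 2) ^ s := by
        rw [← Real.rpow_natCast (((k+1:ℕ):ℝ)) 2, ← Real.rpow_mul (by positivity)]
        norm_num [mul_comm]
      rw [this]
      exact Real.rpow_le_rpow (by positivity) (by push_cast; nlinarith) hs0
    have hp : (0:ℝ) < (((k+1:ℕ):ℝ)) ^ (2 * s) := by
      apply Real.rpow_pos_of_pos; positivity
    exact inv_anti₀ hp hb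
  exact (summable_nat_add_iff 1).1 h3

noncomputable def Ac (s : ℝ) : ℝ := Real.sqrt (∑' k : ℕ, (w s k)⁻¹)
lemma Ac_nonneg (s : ℝ) : 0 ≤ Ac s := Real.sqrt_nonneg _

lemma hsNormSq_nonneg (s : ℝ) (v : ℕ → ℂ) : 0 ≤ hsNormSq s v :=
  tsum_nonneg fun k => by positivity
lemma hsNorm_nonneg (s : ℝ) (v : ℕ → ℂ) : 0 ≤ hsNorm s v := Real.sqrt_nonneg _
lemma hsNorm_sq (s : ℝ) (v : ℕ → ℂ) : hsNorm s v ^ 2 = hsNormSq s v :=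
  Real.sq_sqrt (hsNormSq_nonneg s v)

/-- weighted ℓ² facts -/
lemma L2fact {s : ℝ} {v : ℕ → ℂ} (hv : InHs s v) :
    Summable (fun k => (sw s k * ‖v k‖) ^ 2) ∧
      (∑' k, (sw s k * ‖v k‖) ^ 2) = hsNorm s v ^ 2 := by
  have he : (fun k => (sw s k * ‖v k‖) ^ 2) = fun k : ℕ => (1 + (k:ℝ)^2) ^ s * ‖v k‖ ^ 2 := by
    funext k; rw [mul_pow, sw_sq]; rfl
  constructor
  · rw [he]; exact hv
  · rw [he, hsNorm_sq]; rfl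

/-- ℓ¹ bound -/
lemma L1fact {s : ℝ} (hs : 1 / 2 < s) {v : ℕ → ℂ} (hv : InHs s v) :
    Summable (fun k => ‖v k‖) ∧ (∑' k, ‖v k‖) ≤ Ac s * hsNorm s v := by
  have hs0 : (0:ℝ) ≤ s := by linarith
  have hwi := summable_winv hs
  have hl2 := (L2fact hv).1
  have hsum : Summable (fun k => ‖v k‖) := by
    refine (((hwi.add ((L2fact hv).1)).mul_left (1/2 : ℝ))).of_nonneg_of_le
      (fun k => norm_nonneg _) (fun k => ?_)
    have h2 : 2 * ((sw s k)⁻¹ * (sw s k * ‖v k‖)) ≤ ((sw s k)⁻¹)^2 + (sw s k * ‖v k‖)^2 := by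
      nlinarith [sq_nonneg ((sw s k)⁻¹ - sw s k * ‖v k‖)]
    have hsw : (0:ℝ) < sw s k := lt_of_lt_of_le one_pos (one_le_sw hs0 k)
    have : (sw s k)⁻¹ * (sw s k * ‖v k‖) = ‖v k‖ := by
      field_simp
    rw [this] at h2
    have hinv : ((sw s k)⁻¹)^2 = (w s k)⁻¹ := by
      rw [← sw_sq s k]; rw [inv_pow]
    rw [hinv] at h2
    linarith
  refine ⟨hsum, ?_⟩
  refine hsum.tsum_le_of_sum_le (fun F => ?_)
  have hcs : (∑ k ∈ F, ‖v k‖) ^ 2 ≤ (∑ k ∈ F, (w s k)⁻¹) * (∑ k ∈ F, (sw s k * ‖v k‖)^2) := by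
    have hh := Finset.sum_mul_sq_le_sq_mul_sq F (fun k => (sw s k)⁻¹) (fun k => sw s k * ‖v k‖)
    calc (∑ k ∈ F, ‖v k‖) ^ 2 = (∑ k ∈ F, (sw s k)⁻¹ * (sw s k * ‖v k‖)) ^ 2 := by
          congr 1; apply Finset.sum_congr rfl; intro k _
          have hsw : (0:ℝ) < sw s k := lt_of_lt_of_le one_pos (one_le_sw hs0 k)
          field_simp
      _ ≤ (∑ k ∈ F, ((sw s k)⁻¹)^2) * (∑ k ∈ F, (sw s k * ‖v k‖)^2) := hh
      _ = (∑ k ∈ F, (w s k)⁻¹) * (∑ k ∈ F, (sw s k * ‖v k‖)^2) := by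
          congr 1; apply Finset.sum_congr rfl; intro k _
          rw [← sw_sq s k, inv_pow]
  have h1 : (∑ k ∈ F, (w s k)⁻¹) ≤ ∑' k, (w s k)⁻¹ :=
    Summable.sum_le_tsum F (fun k _ => inv_nonneg.2 (w_pos s k).le) hwi
  have h2 : (∑ k ∈ F, (sw s k * ‖v k‖)^2) ≤ hsNorm s v ^ 2 := by
    rw [← (L2fact hv).2]
    exact Summable.sum_le_tsum F (fun k _ => sq_nonneg _) (L2fact hv).1
  have hA : (∑' k, (w s k)⁻¹) = Ac s ^ 2 := by
    rw [Ac, Real.sq_sqrt (tsum_nonneg fun k => inv_nonneg.2 (w_pos s k).le)]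
  have hfin : (∑ k ∈ F, ‖v k‖) ^ 2 ≤ (Ac s * hsNorm s v) ^ 2 := by
    calc (∑ k ∈ F, ‖v k‖) ^ 2 ≤ (∑ k ∈ F, (w s k)⁻¹) * (∑ k ∈ F, (sw s k * ‖v k‖)^2) := hcs
      _ ≤ (Ac s ^2) * (hsNorm s v ^2) := by
          apply mul_le_mul (hA ▸ h1) h2 (Finset.sum_nonneg fun k _ => sq_nonneg _) (sq_nonneg _)
      _ = (Ac s * hsNorm s v) ^ 2 := by ring
  have h0 : (0:ℝ) ≤ ∑ k ∈ F, ‖v k‖ := Finset.sum_nonneg fun k _ => norm_nonneg _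
  have h0' : (0:ℝ) ≤ Ac s * hsNorm s v := mul_nonneg (Ac_nonneg s) (hsNorm_nonneg s v)
  nlinarith

end St12

namespace St12
-- lp basics
noncomputable abbrev L2 := lp (fun _ : ℕ => ℝ) 2

lemma two_toReal : ((2:ENNReal)).toReal = 2 := by norm_num

lemma mem2 {f : ℕ → ℝ} (h : Summable fun n => f n ^ 2) : Memℓp f 2 := by
  apply memℓp_gen
  have he : (fun n => ‖f n‖ ^ (2:ENNReal).toReal) = fun n => f n ^ 2 := by
    funext n
    rw [two_toReal, show ((2:ℝ)) = ((2:ℕ):ℝ) by norm_num, Real.rpow_natCast]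
    simp [Real.norm_eq_abs, sq_abs]
  rw [he]; exact h

lemma lp_sq_summable (f : L2) : Summable fun n => ((f : ℕ → ℝ) n) ^ 2 := by
  have := (lp.memℓp f).summable (by rw [two_toReal]; norm_num)
  have he : (fun n => ‖(f : ℕ → ℝ) n‖ ^ (2:ENNReal).toReal) = fun n => ((f : ℕ → ℝ) n) ^ 2 := by
    funext n
    rw [two_toReal, show ((2:ℝ)) = ((2:ℕ):ℝ) by norm_num, Real.rpow_natCast]
    simp [Real.norm_eq_abs, sq_abs]
  rwa [he] at this

lemma lp_norm_sq (f : L2) : ‖f‖ ^ 2 = ∑' n, ((f : ℕ → ℝ) n) ^ 2 := by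
  have h := lp.norm_rpow_eq_tsum (p := 2) (by rw [two_toReal]; norm_num) f
  rw [two_toReal, show ((2:ℝ)) = ((2:ℕ):ℝ) by norm_num] at h
  simp only [Real.rpow_natCast] at h
  rw [h]
  apply tsum_congr; intro n
  simp [Real.norm_eq_abs, sq_abs]

/-- evaluation as a continuous linear map -/
noncomputable def ev (n : ℕ) : L2 →L[ℝ] ℝ :=
  LinearMap.mkContinuous
    { toFun := fun f => (f : ℕ → ℝ) n
      map_add' := fun f g => congrFun (lp.coeFn_add f g) n
      map_smul' := fun c f => congrFun (lp.coeFn_smul c f) n }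
    1 (fun f => by
        simpa using lp.norm_apply_le_norm (p := 2) (by norm_num) f n)

lemma ev_apply (n : ℕ) (f : L2) : ev n f = (f : ℕ → ℝ) n := rfl

set_option maxHeartbeats 1000000 in
lemma lp_tsum_apply {ι : Type*} {F : ι → L2} (hF : Summable F) (n : ℕ) :
    (((∑' i, F i) : L2) : ℕ → ℝ) n = ∑' i, ((F i : ℕ → ℝ) n) := by
  have := (ev n).map_tsum hF
  simpa [ev_apply] using this

lemma tsum_prod_mul {ι κ : Type*} {f : ι → ℝ} {g : κ → ℝ} (hf : Summable f) (hg : Summable g)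
    (hf0 : ∀ i, 0 ≤ f i) (hg0 : ∀ j, 0 ≤ g j) :
    ∑' q : ι × κ, f q.1 * g q.2 = (∑' i, f i) * (∑' j, g j) := by
  rw [Summable.tsum_prod' (hf.mul_of_nonneg hg hf0 hg0) (fun b => hg.mul_left (f b))]
  calc ∑' b, ∑' c, f b * g c = ∑' b, f b * ∑' c, g c := by
        apply tsum_congr; intro b; exact tsum_mul_left
    _ = (∑' i, f i) * (∑' j, g j) := tsum_mul_right

/-- shifted sequence facts -/
lemma shift_facts {z : ℕ → ℝ} (hz : Summable fun k => z k ^ 2) (hz0 : ∀ k, 0 ≤ z k) (i j : ℕ) :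
    Summable (fun n => (if j ≤ n + i then z (n + i - j) else 0) ^ 2) ∧
      (∑' n, (if j ≤ n + i then z (n + i - j) else 0) ^ 2) ≤ ∑' k, z k ^ 2 := by
  rcases le_or_gt j i with hji | hij
  · have he : (fun n => (if j ≤ n + i then z (n + i - j) else 0) ^ 2)
        = fun n => z (n + (i - j)) ^ 2 := by
      funext n
      rw [if_pos (by omega)]
      congr 2
      omega
    rw [he]
    have hsum : Summable fun n => z (n + (i - j)) ^ 2 :=
      (summable_nat_add_iff (i - j)).2 hz
    refine ⟨hsum, ?_⟩
    have := Summable.sum_add_tsum_nat_add (f := fun k => z k ^ 2) (i - j) hz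
    have h0 : (0:ℝ) ≤ ∑ m ∈ Finset.range (i - j), z m ^ 2 :=
      Finset.sum_nonneg fun m _ => sq_nonneg _
    linarith
  · have he : (fun n => (if j ≤ n + i then z (n + i - j) else 0) ^ 2)
        = fun n => if j - i ≤ n then z (n - (j - i)) ^ 2 else 0 := by
      funext n
      by_cases h : j ≤ n + i
      · rw [if_pos h, if_pos (by omega)]
        congr 2; omega
      · rw [if_neg h, if_neg (by omega)]
        norm_num
    rw [he]
    have hkey : (fun n => (if j - i ≤ n + (j - i) then z (n + (j - i) - (j - i)) ^ 2 else 0))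
        = fun n => z n ^ 2 := by
      funext n; rw [if_pos (by omega)]; congr 2; omega
    have hsum : Summable (fun n => if j - i ≤ n then z (n - (j - i)) ^ 2 else 0) := by
      apply (summable_nat_add_iff (j - i)).1
      simp only [hkey]
      exact hz
    refine ⟨hsum, ?_⟩
    have heq := Summable.sum_add_tsum_nat_add
      (f := fun n => if j - i ≤ n then z (n - (j - i)) ^ 2 else 0) (j - i) hsum
    have h0 : (∑ m ∈ Finset.range (j - i), (if j - i ≤ m then z (m - (j - i)) ^ 2 else 0)) = 0 := by
      apply Finset.sum_eq_zero; intro m hm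
      rw [if_neg (by simp at hm; omega)]
    have h1 : (∑' n, (if j - i ≤ n + (j - i) then z (n + (j - i) - (j - i)) ^ 2 else 0))
        = ∑' k, z k ^ 2 := by rw [hkey]
    rw [h0, zero_add, h1] at heq
    rw [← heq]

end St12

namespace St12

/-- Young/Minkowski convolution bound: the weighted convolution of one ℓ² and two ℓ¹
nonnegative sequences is in ℓ², with norm bounded by the product. -/
lemma conv_bound {x y z : ℕ → ℝ} (hx0 : ∀ i, 0 ≤ x i) (hy0 : ∀ j, 0 ≤ y j)
    (hz0 : ∀ k, 0 ≤ z k) (hx : Summable x) (hy : Summable y)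
    (hz : Summable fun k => z k ^ 2) :
    ∃ e : L2, (∀ n : ℕ, (e : ℕ → ℝ) n =
        ∑' q : ℕ × ℕ, (if q.2 ≤ n + q.1 then z (n + q.1 - q.2) * x q.1 * y q.2 else 0)) ∧
      ‖e‖ ≤ Real.sqrt (∑' k, z k ^ 2) * (∑' i, x i) * (∑' j, y j) := by
  set Z : ℝ := Real.sqrt (∑' k, z k ^ 2) with hZ
  have hZ0 : 0 ≤ Z := Real.sqrt_nonneg _
  -- shifted lp elements
  have hmem : ∀ q : ℕ × ℕ, Memℓp (fun n => if q.2 ≤ n + q.1 then z (n + q.1 - q.2) else 0) 2 :=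
    fun q => mem2 (shift_facts hz hz0 q.1 q.2).1
  set zel : ℕ × ℕ → L2 := fun q => ⟨_, hmem q⟩ with hzel
  have hzel_coe : ∀ q : ℕ × ℕ, ∀ n, (zel q : ℕ → ℝ) n
      = (if q.2 ≤ n + q.1 then z (n + q.1 - q.2) else 0) := fun q n => rfl
  have hzel_norm : ∀ q : ℕ × ℕ, ‖zel q‖ ≤ Z := by
    intro q
    have h1 : ‖zel q‖ ^ 2 ≤ Z ^ 2 := by
      rw [lp_norm_sq, hZ, Real.sq_sqrt (tsum_nonneg fun k => sq_nonneg _)]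
      exact (shift_facts hz hz0 q.1 q.2).2
    nlinarith [norm_nonneg (zel q)]
  set G : ℕ × ℕ → L2 := fun q => (x q.1 * y q.2) • zel q with hG
  have hGnorm : ∀ q, ‖G q‖ ≤ x q.1 * y q.2 * Z := by
    intro q
    rw [hG, norm_smul]
    have : ‖x q.1 * y q.2‖ = x q.1 * y q.2 := by
      rw [Real.norm_eq_abs, abs_of_nonneg (mul_nonneg (hx0 _) (hy0 _))]
    rw [this]
    exact mul_le_mul_of_nonneg_left (hzel_norm q) (mul_nonneg (hx0 _) (hy0 _))
  have hdom : Summable (fun q : ℕ × ℕ => x q.1 * y q.2 * Z) :=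
    (hx.mul_of_nonneg hy hx0 hy0).mul_right Z
  have hGsumnorm : Summable (fun q => ‖G q‖) :=
    hdom.of_nonneg_of_le (fun q => norm_nonneg _) hGnorm
  have hGsum : Summable G := hGsumnorm.of_norm
  refine ⟨∑' q, G q, ?_, ?_⟩
  · intro n
    rw [lp_tsum_apply hGsum n]
    apply tsum_congr
    intro q
    have : (G q : ℕ → ℝ) n = (x q.1 * y q.2) * (zel q : ℕ → ℝ) n := by
      rw [hG]; exact congrFun (lp.coeFn_smul (x q.1 * y q.2) (zel q)) n
    rw [this, hzel_coe]
    by_cases h : q.2 ≤ n + q.1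
    · rw [if_pos h, if_pos h]; ring
    · rw [if_neg h, if_neg h]; ring
  · calc ‖∑' q, G q‖ ≤ ∑' q, ‖G q‖ := norm_tsum_le_tsum_norm hGsumnorm
      _ ≤ ∑' q : ℕ × ℕ, x q.1 * y q.2 * Z := Summable.tsum_le_tsum hGnorm hGsumnorm hdom
      _ = (∑' q : ℕ × ℕ, x q.1 * y q.2) * Z := tsum_mul_right
      _ = Z * (∑' i, x i) * (∑' j, y j) := by
          rw [tsum_prod_mul hx hy hx0 hy0]; ring
      _ = Real.sqrt (∑' k, z k ^ 2) * (∑' i, x i) * (∑' j, y j) := by rw [hZ]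

end St12

namespace St12

def J (n : ℕ) : ℕ × ℕ → ℕ × ℕ × ℕ := fun q => (n + q.1 - q.2, q.1, q.2)

lemma J_inj (n : ℕ) : Function.Injective (J n) := by
  intro q q' h
  simp only [J, Prod.mk.injEq] at h
  exact Prod.ext h.2.1 h.2.2

section TriDuo
variable {M : Type*} [AddCommMonoid M] [TopologicalSpace M]

def tri (n : ℕ) (f : ℕ → ℕ → ℕ → M) : ℕ × ℕ × ℕ → M :=
  fun p => if p.1 + p.2.2 = n + p.2.1 then f p.1 p.2.1 p.2.2 else 0

def duo (n : ℕ) (f : ℕ → ℕ → ℕ → M) : ℕ × ℕ → M :=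
  fun q => if q.2 ≤ n + q.1 then f (n + q.1 - q.2) q.1 q.2 else 0

lemma tri_support (n : ℕ) (f : ℕ → ℕ → ℕ → M) :
    Function.support (tri n f) ⊆ Set.range (J n) := by
  intro p hp
  rw [Function.mem_support] at hp
  rw [tri] at hp
  by_cases h : p.1 + p.2.2 = n + p.2.1
  · refine ⟨(p.2.1, p.2.2), ?_⟩
    have h1 : n + p.2.1 - p.2.2 = p.1 := by omega
    rw [J]
    simp only [h1]
  · rw [if_neg h] at hp; exact absurd rfl hp

lemma tri_comp (n : ℕ) (f : ℕ → ℕ → ℕ → M) : (tri n f) ∘ (J n) = duo n f := by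
  funext q
  simp only [Function.comp_apply, tri, duo, J]
  by_cases h : q.2 ≤ n + q.1
  · rw [if_pos h]; exact if_pos (by omega)
  · rw [if_neg h]; exact if_neg (by omega)

lemma tri_eq_duo (n : ℕ) (f : ℕ → ℕ → ℕ → M) :
    ∑' p : ℕ × ℕ × ℕ, tri n f p = ∑' q : ℕ × ℕ, duo n f q := by
  rw [← (J_inj n).tsum_eq (tri_support n f)]
  exact tsum_congr fun q => congrFun (tri_comp n f) q

lemma tri_summable_iff (n : ℕ) (f : ℕ → ℕ → ℕ → M) :
    Summable (tri n f) ↔ Summable (duo n f) := by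
  rw [← (J_inj n).summable_iff (f := tri n f) ?h0, tri_comp]
  case h0 =>
    intro p hp
    by_contra hne
    exact hp (tri_support n f hne)

def sw3 : ℕ × ℕ × ℕ ≃ ℕ × ℕ × ℕ where
  toFun p := (p.2.2, p.2.1, p.1)
  invFun p := (p.2.2, p.2.1, p.1)
  left_inv p := rfl
  right_inv p := rfl

lemma tri_swap_apply (n : ℕ) (f : ℕ → ℕ → ℕ → M) (p : ℕ × ℕ × ℕ) :
    tri n f (sw3 p) = tri n (fun a b c => f c b a) p := by
  simp only [tri, sw3, Equiv.coe_fn_mk]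
  by_cases h : p.1 + p.2.2 = n + p.2.1
  · rw [if_pos h]; exact if_pos (by omega)
  · rw [if_neg h]; exact if_neg (by omega)

lemma tri_swap (n : ℕ) (f : ℕ → ℕ → ℕ → M) :
    ∑' p : ℕ × ℕ × ℕ, tri n f p = ∑' p : ℕ × ℕ × ℕ, tri n (fun a b c => f c b a) p := by
  rw [← sw3.tsum_eq (tri n f)]
  exact tsum_congr fun p => tri_swap_apply n f p

lemma tri_swap_summable (n : ℕ) (f : ℕ → ℕ → ℕ → M) :
    Summable (tri n f) ↔ Summable (tri n (fun a b c => f c b a)) := by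
  rw [← sw3.summable_iff (f := tri n f)]
  exact summable_congr fun p => tri_swap_apply n f p

end TriDuo

end St12

namespace St12

lemma fCoef_norm (k₁ k₂ k₃ k₄ : ℕ) : ‖fCoef k₁ k₂ k₃ k₄‖ ≤ 1 / 4 := by
  rw [fCoef]
  split
  · norm_num
  · rename_i hm
    set m : ℤ := (k₁ : ℤ) ^ 2 - (k₂ : ℤ) ^ 2 + (k₃ : ℤ) ^ 2 - (k₄ : ℤ) ^ 2 with hmdef
    rw [norm_div, Complex.norm_I, norm_mul, Complex.norm_intCast]
    have h4 : ‖(4:ℂ)‖ = 4 := by norm_num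
    rw [h4]
    have h2 : (1:ℝ) ≤ |(m:ℝ)| := by
      have := Int.one_le_abs hm
      have : (1:ℝ) ≤ |(m:ℤ)| := by exact_mod_cast this
      rwa [← Int.cast_abs] at * <;> push_cast at * <;> linarith [this]
    rw [div_le_div_iff₀ (by positivity) (by norm_num)]
    nlinarith

lemma fCoef_swap_star (k₁ k₂ k₃ k₄ : ℕ) :
    fCoef k₂ k₁ k₄ k₃ = (starRingEnd ℂ) (fCoef k₁ k₂ k₃ k₄) := by
  rw [fCoef, fCoef]
  have hneg : ((k₂ : ℤ) ^ 2 - (k₁ : ℤ) ^ 2 + (k₄ : ℤ) ^ 2 - (k₃ : ℤ) ^ 2)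
      = -((k₁ : ℤ) ^ 2 - (k₂ : ℤ) ^ 2 + (k₃ : ℤ) ^ 2 - (k₄ : ℤ) ^ 2) := by ring
  rw [hneg]
  set m : ℤ := (k₁ : ℤ) ^ 2 - (k₂ : ℤ) ^ 2 + (k₃ : ℤ) ^ 2 - (k₄ : ℤ) ^ 2 with hmdef
  by_cases hm : m = 0
  · rw [if_pos (by rw [hm]; ring), if_pos hm, map_zero]
  · rw [if_neg (by simpa using hm), if_neg hm]
    rw [map_div₀, map_mul, Complex.conj_I, map_intCast]
    have h4 : (starRingEnd ℂ) (4:ℂ) = 4 := by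
      rw [show ((4:ℂ)) = ((4:ℝ):ℂ) by norm_num, Complex.conj_ofReal]
    rw [h4]
    push_cast
    rw [mul_neg, div_neg, neg_div]

/-- weight comparison on the resonant set -/
lemma sw_le_two_rpow {s : ℝ} (hs0 : 0 ≤ s) {n K : ℕ} (h : n ≤ 2 * K) :
    sw s n ≤ 2 ^ s * sw s K := by
  have hn : (n:ℝ) ≤ 2 * (K:ℝ) := by exact_mod_cast h
  have h1 : (1:ℝ) + (n:ℝ) ^ 2 ≤ 4 * (1 + (K:ℝ) ^ 2) := by nlinarith [sq_nonneg (n:ℝ), Nat.cast_nonneg (α := ℝ) n]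
  have h2 : w s n ≤ (4 * (1 + (K:ℝ) ^ 2)) ^ s := Real.rpow_le_rpow (by positivity) h1 hs0
  have h3 : ((4:ℝ) * (1 + (K:ℝ) ^ 2)) ^ s = 4 ^ s * w s K :=
    Real.mul_rpow (by norm_num) (by positivity)
  have h4 : (4:ℝ) ^ s = (2 ^ s) ^ 2 := by
    have : ((2:ℝ) * 2) ^ s = 2 ^ s * 2 ^ s := Real.mul_rpow (by norm_num) (by norm_num)
    rw [show (4:ℝ) = 2 * 2 by norm_num, this, sq]
  calc sw s n ≤ Real.sqrt (4 ^ s * w s K) := Real.sqrt_le_sqrt (by rw [← h3]; exact h2)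
    _ = Real.sqrt (4 ^ s) * sw s K := Real.sqrt_mul (by positivity) _
    _ = 2 ^ s * sw s K := by rw [h4, Real.sqrt_sq (by positivity)]

lemma sw_resonant {s : ℝ} (hs0 : 0 ≤ s) {n k₁ k₂ k₃ : ℕ} (h : k₁ + k₃ = n + k₂) :
    sw s n ≤ 2 ^ s * (sw s k₁ + sw s k₃) := by
  rcases le_total k₁ k₃ with hkk | hkk
  · have h1 : sw s n ≤ 2 ^ s * sw s k₃ := sw_le_two_rpow hs0 (by omega)
    have h2 : (0:ℝ) ≤ 2 ^ s * sw s k₁ :=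
      mul_nonneg (Real.rpow_nonneg (by norm_num) s) (sw_nonneg s k₁)
    nlinarith
  · have h1 : sw s n ≤ 2 ^ s * sw s k₁ := sw_le_two_rpow hs0 (by omega)
    have h2 : (0:ℝ) ≤ 2 ^ s * sw s k₃ :=
      mul_nonneg (Real.rpow_nonneg (by norm_num) s) (sw_nonneg s k₃)
    nlinarith

/-- the basic trilinear sum -/
noncomputable def Tt (a b c : ℕ → ℂ) (n : ℕ) : ℂ :=
  ∑' p : ℕ × ℕ × ℕ,
    tri n (fun i j k => fCoef i j k n * a i * (starRingEnd ℂ) (b j) * c k) p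

set_option maxHeartbeats 1000000 in
/-- absolute summability of the trilinear sum -/
lemma Tt_abs_summable {a b c : ℕ → ℂ} (ha : Summable fun k => ‖a k‖)
    (hb : Summable fun k => ‖b k‖) (hc : Summable fun k => ‖c k‖) (n : ℕ) :
    Summable fun p : ℕ × ℕ × ℕ =>
      ‖tri n (fun i j k => fCoef i j k n * a i * (starRingEnd ℂ) (b j) * c k) p‖ := by
  have hbc : Summable (fun q : ℕ × ℕ => ‖b q.1‖ * ‖c q.2‖) :=
    hb.mul_of_nonneg hc (fun k => norm_nonneg _) (fun k => norm_nonneg _)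
  have habc : Summable (fun p : ℕ × ℕ × ℕ => ‖a p.1‖ * (‖b p.2.1‖ * ‖c p.2.2‖)) :=
    ha.mul_of_nonneg hbc (fun k => norm_nonneg _)
      (fun q => mul_nonneg (norm_nonneg _) (norm_nonneg _))
  have hdom : Summable (fun p : ℕ × ℕ × ℕ => (1/4 : ℝ) * (‖a p.1‖ * (‖b p.2.1‖ * ‖c p.2.2‖))) :=
    habc.mul_left (1/4 : ℝ)
  refine hdom.of_nonneg_of_le (fun p => norm_nonneg _) (fun p => ?_)
  rw [tri]
  by_cases h : p.1 + p.2.2 = n + p.2.1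
  · rw [if_pos h]
    have hb' : ‖(starRingEnd ℂ) (b p.2.1)‖ = ‖b p.2.1‖ := RCLike.norm_conj _
    calc ‖fCoef p.1 p.2.1 p.2.2 n * a p.1 * (starRingEnd ℂ) (b p.2.1) * c p.2.2‖
        = ‖fCoef p.1 p.2.1 p.2.2 n‖ * ‖a p.1‖ * ‖b p.2.1‖ * ‖c p.2.2‖ := by
          rw [norm_mul, norm_mul, norm_mul, hb']
      _ ≤ (1/4) * ‖a p.1‖ * ‖b p.2.1‖ * ‖c p.2.2‖ := by
          have := fCoef_norm p.1 p.2.1 p.2.2 n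
          have h0 : (0:ℝ) ≤ ‖a p.1‖ * ‖b p.2.1‖ * ‖c p.2.2‖ := by positivity
          nlinarith [norm_nonneg (a p.1), norm_nonneg (b p.2.1), norm_nonneg (c p.2.2),
            mul_nonneg (norm_nonneg (a p.1)) (norm_nonneg (b p.2.1))]
      _ = (1/4) * (‖a p.1‖ * (‖b p.2.1‖ * ‖c p.2.2‖)) := by ring
  · rw [if_neg h]
    simp only [norm_zero]
    positivity

end St12

namespace St12

set_option maxHeartbeats 1000000 in
/-- The central estimate: `Tt a b c ∈ H^s` with norm `≲ ‖a‖ ‖b‖ ‖c‖`. -/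
lemma Tt_bound {s : ℝ} (hs : 1/2 < s) {a b c : ℕ → ℂ} (ha : InHs s a) (hb : InHs s b)
    (hc : InHs s c) :
    InHs s (Tt a b c) ∧ hsNorm s (Tt a b c)
      ≤ (2 ^ s * Ac s ^ 2) * (hsNorm s a * hsNorm s b * hsNorm s c) := by
  have hs0 : (0:ℝ) ≤ s := by linarith
  set α : ℕ → ℝ := fun k => ‖a k‖ with hα
  set β : ℕ → ℝ := fun k => ‖b k‖ with hβ
  set γ : ℕ → ℝ := fun k => ‖c k‖ with hγ
  set ua : ℕ → ℝ := fun k => sw s k * ‖a k‖ with hua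
  set uc : ℕ → ℝ := fun k => sw s k * ‖c k‖ with huc
  set Na := hsNorm s a
  set Nb := hsNorm s b
  set Nc := hsNorm s c
  have hNa0 : 0 ≤ Na := hsNorm_nonneg s a
  have hNb0 : 0 ≤ Nb := hsNorm_nonneg s b
  have hNc0 : 0 ≤ Nc := hsNorm_nonneg s c
  have l1a := L1fact hs ha
  have l1b := L1fact hs hb
  have l1c := L1fact hs hc
  have l2a := L2fact ha
  have l2c := L2fact hc
  have hα0 : ∀ k, 0 ≤ α k := fun k => norm_nonneg _
  have hβ0 : ∀ k, 0 ≤ β k := fun k => norm_nonneg _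
  have hγ0 : ∀ k, 0 ≤ γ k := fun k => norm_nonneg _
  have hua0 : ∀ k, 0 ≤ ua k := fun k => mul_nonneg (sw_nonneg s k) (norm_nonneg _)
  have huc0 : ∀ k, 0 ≤ uc k := fun k => mul_nonneg (sw_nonneg s k) (norm_nonneg _)
  have hua_bd : ∀ k, ua k ≤ Na := by
    intro k
    have h1 : ua k ^ 2 ≤ Na ^ 2 := by
      rw [← l2a.2]
      exact Summable.le_tsum l2a.1 k (fun m _ => sq_nonneg _)
    nlinarith [hua0 k]
  have huc_bd : ∀ k, uc k ≤ Nc := by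
    intro k
    have h1 : uc k ^ 2 ≤ Nc ^ 2 := by
      rw [← l2c.2]
      exact Summable.le_tsum l2c.1 k (fun m _ => sq_nonneg _)
    nlinarith [huc0 k]
  -- the two lp-majorants
  obtain ⟨e₁, he₁c, he₁n⟩ := conv_bound hβ0 hγ0 hua0 l1b.1 l1c.1 l2a.1
  obtain ⟨e₂, he₂c, he₂n⟩ := conv_bound hβ0 hα0 huc0 l1b.1 l1a.1 l2c.1
  have hZa : Real.sqrt (∑' k, ua k ^ 2) = Na := by
    rw [l2a.2, Real.sqrt_sq hNa0]
  have hZc : Real.sqrt (∑' k, uc k ^ 2) = Nc := by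
    rw [l2c.2, Real.sqrt_sq hNc0]
  rw [hZa] at he₁n
  rw [hZc] at he₂n
  set f₁ : ℕ → ℕ → ℕ → ℝ := fun i j k => ua i * β j * γ k with hf₁
  set f₂ : ℕ → ℕ → ℕ → ℝ := fun i j k => uc i * β j * α k with hf₂
  -- coordinates of e₁, e₂ as constrained triple sums
  have he₁tri : ∀ n, (e₁ : ℕ → ℝ) n = ∑' p : ℕ × ℕ × ℕ, tri n f₁ p := by
    intro n
    rw [he₁c n, tri_eq_duo n f₁]
    exact tsum_congr fun q => by simp only [duo, hf₁]
  have he₂tri : ∀ n, (e₂ : ℕ → ℝ) n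
      = ∑' p : ℕ × ℕ × ℕ, tri n (fun i j k => α i * β j * uc k) p := by
    intro n
    rw [he₂c n, tri_swap n (fun i j k => α i * β j * uc k)]
    have hfe : (fun i j k => (fun i' j' k' => α i' * β j' * uc k') k j i) = f₂ := by
      funext i j k
      simp only [hf₂]
      ring
    rw [hfe, tri_eq_duo n f₂]
    exact tsum_congr fun q => by simp only [duo, hf₂]
  -- summability of the majorant triple sums
  have hsum₁ : ∀ n, Summable (tri n f₁) := by
    intro n
    rw [tri_summable_iff]
    have hdom : Summable (fun q : ℕ × ℕ => Na * (β q.1 * γ q.2)) :=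
      (l1b.1.mul_of_nonneg l1c.1 hβ0 hγ0).mul_left Na
    refine hdom.of_nonneg_of_le (fun q => ?_) (fun q => ?_)
    · rw [duo]; split
      · exact mul_nonneg (mul_nonneg (hua0 _) (hβ0 _)) (hγ0 _)
      · exact le_refl 0
    · rw [duo]; split
      · rename_i h
        have hbd := hua_bd (n + q.1 - q.2)
        have h1 := hβ0 q.1
        have h2 := hγ0 q.2
        have h3 : f₁ (n + q.1 - q.2) q.1 q.2 = ua (n + q.1 - q.2) * β q.1 * γ q.2 := rfl
        rw [h3]
        nlinarith [hua0 (n + q.1 - q.2), mul_nonneg h1 h2]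
      · exact mul_nonneg hNa0 (mul_nonneg (hβ0 _) (hγ0 _))
  have hsum₂ : ∀ n, Summable (tri n (fun i j k => α i * β j * uc k)) := by
    intro n
    rw [tri_swap_summable]
    have hfe : (fun i j k => (fun i' j' k' => α i' * β j' * uc k') k j i) = f₂ := by
      funext i j k
      simp only [hf₂]
      ring
    rw [hfe, tri_summable_iff]
    have hdom : Summable (fun q : ℕ × ℕ => Nc * (β q.1 * α q.2)) :=
      (l1b.1.mul_of_nonneg l1a.1 hβ0 hα0).mul_left Nc
    refine hdom.of_nonneg_of_le (fun q => ?_) (fun q => ?_)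
    · rw [duo]; split
      · exact mul_nonneg (mul_nonneg (huc0 _) (hβ0 _)) (hα0 _)
      · exact le_refl 0
    · rw [duo]; split
      · rename_i h
        have hbd := huc_bd (n + q.1 - q.2)
        have h1 := hβ0 q.1
        have h2 := hα0 q.2
        have h3 : f₂ (n + q.1 - q.2) q.1 q.2 = uc (n + q.1 - q.2) * β q.1 * α q.2 := rfl
        rw [h3]
        nlinarith [huc0 (n + q.1 - q.2), mul_nonneg h1 h2]
      · exact mul_nonneg hNc0 (mul_nonneg (hβ0 _) (hα0 _))
  set c0 : ℝ := 2 ^ s * (1/4) with hc0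
  have hc00 : 0 ≤ c0 := mul_nonneg (Real.rpow_nonneg (by norm_num) s) (by norm_num)
  -- pointwise weighted bound
  have key : ∀ n, sw s n * ‖Tt a b c n‖ ≤ c0 * ((e₁ : ℕ → ℝ) n + (e₂ : ℕ → ℝ) n) := by
    intro n
    have habs := Tt_abs_summable l1a.1 l1b.1 l1c.1 (n := n)
    have h1 : ‖Tt a b c n‖ ≤ ∑' p : ℕ × ℕ × ℕ,
        ‖tri n (fun i j k => fCoef i j k n * a i * (starRingEnd ℂ) (b j) * c k) p‖ :=
      norm_tsum_le_tsum_norm habs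
    have h2 : sw s n * ‖Tt a b c n‖ ≤ ∑' p : ℕ × ℕ × ℕ,
        sw s n * ‖tri n (fun i j k => fCoef i j k n * a i * (starRingEnd ℂ) (b j) * c k) p‖ := by
      rw [tsum_mul_left]
      exact mul_le_mul_of_nonneg_left h1 (sw_nonneg s n)
    have h3 : ∀ p : ℕ × ℕ × ℕ,
        sw s n * ‖tri n (fun i j k => fCoef i j k n * a i * (starRingEnd ℂ) (b j) * c k) p‖
          ≤ c0 * (tri n f₁ p + tri n (fun i j k => α i * β j * uc k) p) := by
      intro p
      rw [tri, tri, tri]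
      by_cases h : p.1 + p.2.2 = n + p.2.1
      · rw [if_pos h, if_pos h, if_pos h]
        have hnorm : ‖fCoef p.1 p.2.1 p.2.2 n * a p.1 * (starRingEnd ℂ) (b p.2.1) * c p.2.2‖
            ≤ (1/4) * (α p.1 * β p.2.1 * γ p.2.2) := by
          have hb' : ‖(starRingEnd ℂ) (b p.2.1)‖ = β p.2.1 := RCLike.norm_conj _
          rw [norm_mul, norm_mul, norm_mul, hb']
          have hfc := fCoef_norm p.1 p.2.1 p.2.2 n
          have h0a := hα0 p.1
          have h0b := hβ0 p.2.1
          have h0c := hγ0 p.2.2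
          have h0f := norm_nonneg (fCoef p.1 p.2.1 p.2.2 n)
          nlinarith [mul_nonneg h0a h0b, mul_nonneg (mul_nonneg h0a h0b) h0c]
        have hws : sw s n ≤ 2 ^ s * (sw s p.1 + sw s p.2.2) := sw_resonant hs0 h
        have h0t : (0:ℝ) ≤ ‖fCoef p.1 p.2.1 p.2.2 n * a p.1 * (starRingEnd ℂ) (b p.2.1) * c p.2.2‖ :=
          norm_nonneg _
        have step : sw s n * ‖fCoef p.1 p.2.1 p.2.2 n * a p.1 * (starRingEnd ℂ) (b p.2.1) * c p.2.2‖
            ≤ (2 ^ s * (sw s p.1 + sw s p.2.2)) * ((1/4) * (α p.1 * β p.2.1 * γ p.2.2)) := by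
          apply mul_le_mul hws hnorm h0t
          exact mul_nonneg (Real.rpow_nonneg (by norm_num) s)
            (add_nonneg (sw_nonneg s p.1) (sw_nonneg s p.2.2))
        refine le_trans step (le_of_eq ?_)
        simp only [hf₁, hc0, hua, huc, hα, hβ, hγ]
        ring
      · rw [if_neg h, if_neg h, if_neg h]
        simp
    have h4 : Summable (fun p : ℕ × ℕ × ℕ =>
        sw s n * ‖tri n (fun i j k => fCoef i j k n * a i * (starRingEnd ℂ) (b j) * c k) p‖) :=
      habs.mul_left _
    have h5 : Summable (fun p : ℕ × ℕ × ℕ =>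
        c0 * (tri n f₁ p + tri n (fun i j k => α i * β j * uc k) p)) :=
      ((hsum₁ n).add (hsum₂ n)).mul_left _
    calc sw s n * ‖Tt a b c n‖
        ≤ ∑' p : ℕ × ℕ × ℕ,
          sw s n * ‖tri n (fun i j k => fCoef i j k n * a i * (starRingEnd ℂ) (b j) * c k) p‖ := h2
      _ ≤ ∑' p : ℕ × ℕ × ℕ,
          c0 * (tri n f₁ p + tri n (fun i j k => α i * β j * uc k) p) := Summable.tsum_le_tsum h3 h4 h5
      _ = c0 * ((∑' p : ℕ × ℕ × ℕ, tri n f₁ p)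
          + ∑' p : ℕ × ℕ × ℕ, tri n (fun i j k => α i * β j * uc k) p) := by
          rw [tsum_mul_left, Summable.tsum_add (hsum₁ n) (hsum₂ n)]
      _ = c0 * ((e₁ : ℕ → ℝ) n + (e₂ : ℕ → ℝ) n) := by rw [he₁tri n, he₂tri n]
  -- assemble
  set E : L2 := e₁ + e₂ with hE
  have hEc : ∀ n, (E : ℕ → ℝ) n = (e₁ : ℕ → ℝ) n + (e₂ : ℕ → ℝ) n :=
    fun n => congrFun (lp.coeFn_add e₁ e₂) n
  have hptsq : ∀ n : ℕ, (1 + (n:ℝ) ^ 2) ^ s * ‖Tt a b c n‖ ^ 2 ≤ c0 ^ 2 * ((E : ℕ → ℝ) n) ^ 2 := by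
    intro n
    have h1 : (1 + (n:ℝ) ^ 2) ^ s * ‖Tt a b c n‖ ^ 2 = (sw s n * ‖Tt a b c n‖) ^ 2 := by
      rw [mul_pow, sw_sq]
      rfl
    rw [h1, hEc n]
    have h2 := key n
    have h0 : 0 ≤ sw s n * ‖Tt a b c n‖ := mul_nonneg (sw_nonneg s n) (norm_nonneg _)
    calc (sw s n * ‖Tt a b c n‖) ^ 2 ≤ (c0 * ((e₁ : ℕ → ℝ) n + (e₂ : ℕ → ℝ) n)) ^ 2 := by
          nlinarith
      _ = c0 ^ 2 * ((e₁ : ℕ → ℝ) n + (e₂ : ℕ → ℝ) n) ^ 2 := by ring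
  have hIn : InHs s (Tt a b c) := by
    refine (((lp_sq_summable E).mul_left (c0 ^ 2)).of_nonneg_of_le (fun n => ?_) hptsq)
    positivity
  refine ⟨hIn, ?_⟩
  have hsq : hsNormSq s (Tt a b c) ≤ (c0 * (‖e₁‖ + ‖e₂‖)) ^ 2 := by
    have h1 : hsNormSq s (Tt a b c) ≤ c0 ^ 2 * ∑' n, ((E : ℕ → ℝ) n) ^ 2 := by
      rw [hsNormSq, ← tsum_mul_left]
      exact Summable.tsum_le_tsum hptsq hIn ((lp_sq_summable E).mul_left _)
    rw [← lp_norm_sq] at h1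
    have h2 : ‖E‖ ≤ ‖e₁‖ + ‖e₂‖ := norm_add_le e₁ e₂
    have h3 : ‖E‖ ^ 2 ≤ (‖e₁‖ + ‖e₂‖) ^ 2 := by nlinarith [norm_nonneg E]
    calc hsNormSq s (Tt a b c) ≤ c0 ^ 2 * ‖E‖ ^ 2 := h1
      _ ≤ c0 ^ 2 * (‖e₁‖ + ‖e₂‖) ^ 2 := by nlinarith [sq_nonneg c0]
      _ = (c0 * (‖e₁‖ + ‖e₂‖)) ^ 2 := by ring
  have hfinal : hsNorm s (Tt a b c) ≤ c0 * (‖e₁‖ + ‖e₂‖) := by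
    rw [hsNorm]
    have h0 : 0 ≤ c0 * (‖e₁‖ + ‖e₂‖) := by positivity
    calc Real.sqrt (hsNormSq s (Tt a b c)) ≤ Real.sqrt ((c0 * (‖e₁‖ + ‖e₂‖)) ^ 2) :=
          Real.sqrt_le_sqrt hsq
      _ = c0 * (‖e₁‖ + ‖e₂‖) := Real.sqrt_sq h0
  refine hfinal.trans ?_
  -- final arithmetic
  have hβs : 0 ≤ ∑' k, β k := tsum_nonneg hβ0
  have hγs : 0 ≤ ∑' k, γ k := tsum_nonneg hγ0
  have hαs : 0 ≤ ∑' k, α k := tsum_nonneg hα0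
  have hb1 : (∑' k, β k) ≤ Ac s * Nb := l1b.2
  have hc1 : (∑' k, γ k) ≤ Ac s * Nc := l1c.2
  have ha1 : (∑' k, α k) ≤ Ac s * Na := l1a.2
  have hAc0 := Ac_nonneg s
  have hbd1 : ‖e₁‖ ≤ Na * (Ac s * Nb) * (Ac s * Nc) := by
    refine he₁n.trans ?_
    have := mul_le_mul hb1 hc1 hγs (by positivity)
    calc Na * (∑' i, β i) * (∑' j, γ j) = Na * ((∑' i, β i) * (∑' j, γ j)) := by ring
      _ ≤ Na * ((Ac s * Nb) * (Ac s * Nc)) := by nlinarith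
      _ = Na * (Ac s * Nb) * (Ac s * Nc) := by ring
  have hbd2 : ‖e₂‖ ≤ Nc * (Ac s * Nb) * (Ac s * Na) := by
    refine he₂n.trans ?_
    have := mul_le_mul hb1 ha1 hαs (by positivity)
    calc Nc * (∑' i, β i) * (∑' j, α j) = Nc * ((∑' i, β i) * (∑' j, α j)) := by ring
      _ ≤ Nc * ((Ac s * Nb) * (Ac s * Na)) := by nlinarith
      _ = Nc * (Ac s * Nb) * (Ac s * Na) := by ring
  have h2s : (0:ℝ) ≤ 2 ^ s := Real.rpow_nonneg (by norm_num) s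
  calc c0 * (‖e₁‖ + ‖e₂‖)
      ≤ c0 * (Na * (Ac s * Nb) * (Ac s * Nc) + Nc * (Ac s * Nb) * (Ac s * Na)) := by
        have h01 : 0 ≤ ‖e₁‖ := norm_nonneg _
        have h02 : 0 ≤ ‖e₂‖ := norm_nonneg _
        nlinarith
    _ = (2 ^ s * (1/2)) * Ac s ^ 2 * (Na * Nb * Nc) := by rw [hc0]; ring
    _ ≤ (2 ^ s * Ac s ^ 2) * (Na * Nb * Nc) := by nlinarith [sq_nonneg (Ac s), mul_nonneg (mul_nonneg hNa0 hNb0) hNc0, mul_nonneg (mul_nonneg (mul_nonneg h2s (sq_nonneg (Ac s))) (mul_nonneg (mul_nonneg hNa0 hNb0) hNc0)) (by norm_num : (0:ℝ) ≤ 1)]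
end St12

namespace St12

lemma ffun_term_le (v : ℕ → ℂ) (q : ℕ × ℕ × ℕ × ℕ) :
    ‖if q.1 + q.2.2.1 = q.2.1 + q.2.2.2 then
      fCoef q.1 q.2.1 q.2.2.1 q.2.2.2 * v q.1 * (starRingEnd ℂ) (v q.2.1) * v q.2.2.1 *
        (starRingEnd ℂ) (v q.2.2.2)
    else 0‖ ≤ (1/4 : ℝ) * (‖v q.1‖ * (‖v q.2.1‖ * (‖v q.2.2.1‖ * ‖v q.2.2.2‖))) := by
  split
  · rw [norm_mul, norm_mul, norm_mul, norm_mul, RCLike.norm_conj, RCLike.norm_conj]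
    have hfc := fCoef_norm q.1 q.2.1 q.2.2.1 q.2.2.2
    have h1 := norm_nonneg (v q.1)
    have h2 := norm_nonneg (v q.2.1)
    have h3 := norm_nonneg (v q.2.2.1)
    have h4 := norm_nonneg (v q.2.2.2)
    have h5 : (0:ℝ) ≤ ‖v q.1‖ * ‖v q.2.1‖ := mul_nonneg h1 h2
    have h6 : (0:ℝ) ≤ ‖v q.1‖ * ‖v q.2.1‖ * ‖v q.2.2.1‖ := mul_nonneg h5 h3
    nlinarith [mul_nonneg h6 h4]
  · simp only [norm_zero]
    positivity

set_option maxHeartbeats 1000000 in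
lemma ffun_dom_summable {v : ℕ → ℂ} (hv : Summable fun k => ‖v k‖) :
    Summable (fun q : ℕ × ℕ × ℕ × ℕ =>
      (1/4 : ℝ) * (‖v q.1‖ * (‖v q.2.1‖ * (‖v q.2.2.1‖ * ‖v q.2.2.2‖)))) := by
  have h0 : ∀ k : ℕ, (0:ℝ) ≤ ‖v k‖ := fun k => norm_nonneg _
  have h2 : Summable (fun q : ℕ × ℕ => ‖v q.1‖ * ‖v q.2‖) := hv.mul_of_nonneg hv h0 h0
  have h3 : Summable (fun q : ℕ × ℕ × ℕ => ‖v q.1‖ * (‖v q.2.1‖ * ‖v q.2.2‖)) :=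
    hv.mul_of_nonneg h2 h0 (fun q => mul_nonneg (h0 _) (h0 _))
  have h4 : Summable (fun q : ℕ × ℕ × ℕ × ℕ =>
      ‖v q.1‖ * (‖v q.2.1‖ * (‖v q.2.2.1‖ * ‖v q.2.2.2‖))) :=
    hv.mul_of_nonneg h3 h0
      (fun q => mul_nonneg (h0 _) (mul_nonneg (h0 _) (h0 _)))
  exact h4.mul_left (1/4 : ℝ)

set_option maxHeartbeats 1000000 in
lemma ffun_dom_tsum {v : ℕ → ℂ} (hv : Summable fun k => ‖v k‖) :
    (∑' q : ℕ × ℕ × ℕ × ℕ,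
      (1/4 : ℝ) * (‖v q.1‖ * (‖v q.2.1‖ * (‖v q.2.2.1‖ * ‖v q.2.2.2‖))))
    = (1/4 : ℝ) * ((∑' k, ‖v k‖) * ((∑' k, ‖v k‖) * ((∑' k, ‖v k‖) * (∑' k, ‖v k‖)))) := by
  have h0 : ∀ k : ℕ, (0:ℝ) ≤ ‖v k‖ := fun k => norm_nonneg _
  have h2 : Summable (fun q : ℕ × ℕ => ‖v q.1‖ * ‖v q.2‖) := hv.mul_of_nonneg hv h0 h0
  have h3 : Summable (fun q : ℕ × ℕ × ℕ => ‖v q.1‖ * (‖v q.2.1‖ * ‖v q.2.2‖)) :=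
    hv.mul_of_nonneg h2 h0 (fun q => mul_nonneg (h0 _) (h0 _))
  rw [tsum_mul_left]
  congr 1
  have e2 : (∑' q : ℕ × ℕ, ‖v q.1‖ * ‖v q.2‖) = (∑' k, ‖v k‖) * (∑' k, ‖v k‖) :=
    tsum_prod_mul hv hv h0 h0
  have e3 : (∑' q : ℕ × ℕ × ℕ, ‖v q.1‖ * (‖v q.2.1‖ * ‖v q.2.2‖))
      = (∑' k, ‖v k‖) * ((∑' k, ‖v k‖) * (∑' k, ‖v k‖)) := by
    have := tsum_prod_mul (f := fun k => ‖v k‖) (g := fun q : ℕ × ℕ => ‖v q.1‖ * ‖v q.2‖)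
      hv h2 h0 (fun q => mul_nonneg (h0 _) (h0 _))
    rw [this, e2]
  have := tsum_prod_mul (f := fun k => ‖v k‖)
    (g := fun q : ℕ × ℕ × ℕ => ‖v q.1‖ * (‖v q.2.1‖ * ‖v q.2.2‖))
    hv h3 h0 (fun q => mul_nonneg (h0 _) (mul_nonneg (h0 _) (h0 _)))
  rw [this, e3]

set_option maxHeartbeats 1000000 in
lemma ffunSummable_of_l1 {v : ℕ → ℂ} (hv : Summable fun k => ‖v k‖) : FfunSummable v :=
  (ffun_dom_summable hv).of_nonneg_of_le (fun q => norm_nonneg _) (ffun_term_le v)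

set_option maxHeartbeats 1000000 in
lemma ffun_bound {v : ℕ → ℂ} (hv : Summable fun k => ‖v k‖) :
    ‖Ffun v‖ ≤ (1/4 : ℝ) * ((∑' k, ‖v k‖) * ((∑' k, ‖v k‖) * ((∑' k, ‖v k‖) * (∑' k, ‖v k‖)))) := by
  calc ‖Ffun v‖ ≤ ∑' q : ℕ × ℕ × ℕ × ℕ, ‖if q.1 + q.2.2.1 = q.2.1 + q.2.2.2 then
          fCoef q.1 q.2.1 q.2.2.1 q.2.2.2 * v q.1 * (starRingEnd ℂ) (v q.2.1) * v q.2.2.1 *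
            (starRingEnd ℂ) (v q.2.2.2) else 0‖ :=
        norm_tsum_le_tsum_norm (ffunSummable_of_l1 hv)
    _ ≤ ∑' q : ℕ × ℕ × ℕ × ℕ,
          (1/4 : ℝ) * (‖v q.1‖ * (‖v q.2.1‖ * (‖v q.2.2.1‖ * ‖v q.2.2.2‖))) :=
        Summable.tsum_le_tsum (ffun_term_le v) (ffunSummable_of_l1 hv) (ffun_dom_summable hv)
    _ = _ := ffun_dom_tsum hv

def sw4 : ℕ × ℕ × ℕ × ℕ ≃ ℕ × ℕ × ℕ × ℕ where
  toFun q := (q.2.1, q.1, q.2.2.2, q.2.2.1)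
  invFun q := (q.2.1, q.1, q.2.2.2, q.2.2.1)
  left_inv q := rfl
  right_inv q := rfl

lemma ffun_real (v : ℕ → ℂ) : (Ffun v).im = 0 := by
  rw [← Complex.conj_eq_iff_im]
  have hstar : (starRingEnd ℂ) (Ffun v)
      = ∑' q : ℕ × ℕ × ℕ × ℕ, (starRingEnd ℂ)
        (if q.1 + q.2.2.1 = q.2.1 + q.2.2.2 then
          fCoef q.1 q.2.1 q.2.2.1 q.2.2.2 * v q.1 * (starRingEnd ℂ) (v q.2.1) * v q.2.2.1 *
            (starRingEnd ℂ) (v q.2.2.2) else 0) := by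
    rw [Ffun]
    exact tsum_star
  rw [hstar]
  rw [show (Ffun v) = ∑' q : ℕ × ℕ × ℕ × ℕ,
      (if (sw4 q).1 + (sw4 q).2.2.1 = (sw4 q).2.1 + (sw4 q).2.2.2 then
        fCoef (sw4 q).1 (sw4 q).2.1 (sw4 q).2.2.1 (sw4 q).2.2.2 * v (sw4 q).1 *
          (starRingEnd ℂ) (v (sw4 q).2.1) * v (sw4 q).2.2.1 *
          (starRingEnd ℂ) (v (sw4 q).2.2.2) else 0) from (sw4.tsum_eq _).symm]
  apply tsum_congr
  intro q
  obtain ⟨k₁, k₂, k₃, k₄⟩ := q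
  simp only [sw4, Equiv.coe_fn_mk]
  by_cases h : k₁ + k₃ = k₂ + k₄
  · rw [if_pos h]; refine Eq.trans ?_ (if_pos h.symm).symm
    rw [fCoef_swap_star k₁ k₂ k₃ k₄]
    rw [map_mul, map_mul, map_mul, map_mul, Complex.conj_conj, Complex.conj_conj]
    ring
  · rw [if_neg h, map_zero]; exact (if_neg (fun hc : k₂ + k₄ = k₁ + k₃ => h hc.symm)).symm

/-! ### Hs algebra -/

lemma InHs_congr {s : ℝ} {u u' : ℕ → ℂ} (h : ∀ k, u k = u' k) (hu : InHs s u) : InHs s u' := by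
  have : u = u' := funext h
  rwa [← this]

lemma hsNorm_congr (s : ℝ) {u u' : ℕ → ℂ} (h : ∀ k, u k = u' k) : hsNorm s u = hsNorm s u' := by
  have : u = u' := funext h
  rw [this]

lemma InHs_add {s : ℝ} {u u' : ℕ → ℂ} (hu : InHs s u) (hu' : InHs s u') :
    InHs s (fun k => u k + u' k) := by
  refine ((hu.mul_left 2).add (hu'.mul_left 2)).of_nonneg_of_le (fun k => ?_) (fun k => ?_)
  · have := w_pos s k
    positivity
  · have hw := (w_pos s k).le
    have htri : ‖u k + u' k‖ ≤ ‖u k‖ + ‖u' k‖ := norm_add_le _ _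
    have h2 : ‖u k + u' k‖ ^ 2 ≤ 2 * ‖u k‖ ^ 2 + 2 * ‖u' k‖ ^ 2 := by
      nlinarith [htri, sq_nonneg (‖u k‖ - ‖u' k‖), norm_nonneg (u k + u' k),
        norm_nonneg (u k), norm_nonneg (u' k)]
    calc (1 + (k:ℝ) ^ 2) ^ s * ‖u k + u' k‖ ^ 2
        ≤ (1 + (k:ℝ) ^ 2) ^ s * (2 * ‖u k‖ ^ 2 + 2 * ‖u' k‖ ^ 2) := by
          exact mul_le_mul_of_nonneg_left h2 hw
      _ = 2 * ((1 + (k:ℝ) ^ 2) ^ s * ‖u k‖ ^ 2) + 2 * ((1 + (k:ℝ) ^ 2) ^ s * ‖u' k‖ ^ 2) := by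
          ring

lemma InHs_smulC {s : ℝ} (z : ℂ) {u : ℕ → ℂ} (hu : InHs s u) :
    InHs s (fun k => z * u k) := by
  refine (hu.mul_left (‖z‖ ^ 2)).of_nonneg_of_le (fun k => ?_) (fun k => ?_)
  · have := w_pos s k
    positivity
  · rw [norm_mul, mul_pow]
    have := (w_pos s k).le
    nlinarith [sq_nonneg ‖u k‖, sq_nonneg ‖z‖, mul_nonneg this (sq_nonneg ‖u k‖)]

lemma hsNorm_smulC (s : ℝ) (z : ℂ) (u : ℕ → ℂ) :
    hsNorm s (fun k => z * u k) = ‖z‖ * hsNorm s u := by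
  rw [hsNorm, hsNorm, hsNormSq, hsNormSq]
  have he : (fun k : ℕ => (1 + (k:ℝ) ^ 2) ^ s * ‖z * u k‖ ^ 2)
      = fun k : ℕ => ‖z‖ ^ 2 * ((1 + (k:ℝ) ^ 2) ^ s * ‖u k‖ ^ 2) := by
    funext k
    rw [norm_mul, mul_pow]
    ring
  rw [he, tsum_mul_left, Real.sqrt_mul (sq_nonneg _), Real.sqrt_sq (norm_nonneg z)]

/-- complex lp space -/
noncomputable abbrev L2C := lp (fun _ : ℕ => ℂ) 2

lemma mem2C {f : ℕ → ℂ} (h : Summable fun n => ‖f n‖ ^ 2) : Memℓp f 2 := by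
  apply memℓp_gen
  have he : (fun n => ‖f n‖ ^ (2:ENNReal).toReal) = fun n => ‖f n‖ ^ 2 := by
    funext n
    rw [two_toReal, show ((2:ℝ)) = ((2:ℕ):ℝ) by norm_num, Real.rpow_natCast]
  rw [he]; exact h

lemma lp_norm_sqC (f : L2C) : ‖f‖ ^ 2 = ∑' n, ‖(f : ℕ → ℂ) n‖ ^ 2 := by
  have h := lp.norm_rpow_eq_tsum (p := 2) (by rw [two_toReal]; norm_num) f
  rw [two_toReal, show ((2:ℝ)) = ((2:ℕ):ℝ) by norm_num] at h
  simp only [Real.rpow_natCast] at h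
  rw [h]

lemma hs_mem2C {s : ℝ} {u : ℕ → ℂ} (hu : InHs s u) :
    Memℓp (fun k => ((sw s k : ℝ) : ℂ) * u k) 2 := by
  apply mem2C
  have he : (fun n => ‖((sw s n : ℝ) : ℂ) * u n‖ ^ 2)
      = fun n : ℕ => (1 + (n:ℝ) ^ 2) ^ s * ‖u n‖ ^ 2 := by
    funext n
    rw [norm_mul, Complex.norm_real, Real.norm_eq_abs, abs_of_nonneg (sw_nonneg s n), mul_pow,
      sw_sq]
    rfl
  rw [he]; exact hu

lemma hsNorm_eq_lp {s : ℝ} {u : ℕ → ℂ} (hu : InHs s u) :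
    hsNorm s u = ‖(⟨fun k => ((sw s k : ℝ) : ℂ) * u k, hs_mem2C hu⟩ : L2C)‖ := by
  set F : L2C := ⟨fun k => ((sw s k : ℝ) : ℂ) * u k, hs_mem2C hu⟩ with hF
  have h1 : hsNormSq s u = ‖F‖ ^ 2 := by
    rw [lp_norm_sqC, hsNormSq]
    apply tsum_congr
    intro n
    have hc : (F : ℕ → ℂ) n = ((sw s n : ℝ) : ℂ) * u n := rfl
    rw [hc, norm_mul, Complex.norm_real, Real.norm_eq_abs, abs_of_nonneg (sw_nonneg s n),
      mul_pow, sw_sq]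
    rfl
  rw [hsNorm, h1, Real.sqrt_sq (norm_nonneg F)]

lemma hsNorm_add_le {s : ℝ} {u u' : ℕ → ℂ} (hu : InHs s u) (hu' : InHs s u') :
    hsNorm s (fun k => u k + u' k) ≤ hsNorm s u + hsNorm s u' := by
  rw [hsNorm_eq_lp (InHs_add hu hu'), hsNorm_eq_lp hu, hsNorm_eq_lp hu']
  have he : (⟨fun k => ((sw s k : ℝ) : ℂ) * (u k + u' k), hs_mem2C (InHs_add hu hu')⟩ : L2C)
      = (⟨fun k => ((sw s k : ℝ) : ℂ) * u k, hs_mem2C hu⟩ : L2C)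
        + (⟨fun k => ((sw s k : ℝ) : ℂ) * u' k, hs_mem2C hu'⟩ : L2C) := by
    apply Subtype.ext
    have := lp.coeFn_add (⟨fun k => ((sw s k : ℝ) : ℂ) * u k, hs_mem2C hu⟩ : L2C)
      (⟨fun k => ((sw s k : ℝ) : ℂ) * u' k, hs_mem2C hu'⟩ : L2C)
    refine funext fun k => ?_
    have h2 := congrFun this k
    calc ((sw s k : ℝ) : ℂ) * (u k + u' k)
        = ((sw s k : ℝ) : ℂ) * u k + ((sw s k : ℝ) : ℂ) * u' k := by ring
      _ = _ := h2.symm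
  rw [he]
  exact norm_add_le _ _

end St12

namespace St12

lemma XF_eq (v : ℕ → ℂ) (n : ℕ) : XF v n = (-4) * Complex.I * Tt v v v n := rfl

lemma l1_add {a b : ℕ → ℂ} (ha : Summable fun k => ‖a k‖) (hb : Summable fun k => ‖b k‖) :
    Summable fun k => ‖a k + b k‖ :=
  (ha.add hb).of_nonneg_of_le (fun k => norm_nonneg _) (fun k => norm_add_le _ _)

set_option maxHeartbeats 1000000 in
lemma Tt_add1 {a₁ a₂ b c : ℕ → ℂ} (h1 : Summable fun k => ‖a₁ k‖)
    (h2 : Summable fun k => ‖a₂ k‖) (hb : Summable fun k => ‖b k‖)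
    (hc : Summable fun k => ‖c k‖) (n : ℕ) :
    Tt (fun j => a₁ j + a₂ j) b c n = Tt a₁ b c n + Tt a₂ b c n := by
  rw [Tt, Tt, Tt,
    ← Summable.tsum_add ((Tt_abs_summable h1 hb hc n).of_norm) ((Tt_abs_summable h2 hb hc n).of_norm)]
  apply tsum_congr
  intro p
  simp only [tri]
  by_cases h : p.1 + p.2.2 = n + p.2.1
  · rw [if_pos h, if_pos h, if_pos h]; ring
  · rw [if_neg h, if_neg h, if_neg h]; ring

set_option maxHeartbeats 1000000 in
lemma Tt_add2 {a b₁ b₂ c : ℕ → ℂ} (ha : Summable fun k => ‖a k‖)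
    (h1 : Summable fun k => ‖b₁ k‖) (h2 : Summable fun k => ‖b₂ k‖)
    (hc : Summable fun k => ‖c k‖) (n : ℕ) :
    Tt a (fun j => b₁ j + b₂ j) c n = Tt a b₁ c n + Tt a b₂ c n := by
  rw [Tt, Tt, Tt,
    ← Summable.tsum_add ((Tt_abs_summable ha h1 hc n).of_norm) ((Tt_abs_summable ha h2 hc n).of_norm)]
  apply tsum_congr
  intro p
  simp only [tri]
  by_cases h : p.1 + p.2.2 = n + p.2.1
  · rw [if_pos h, if_pos h, if_pos h, map_add]; ring
  · rw [if_neg h, if_neg h, if_neg h]; ring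

set_option maxHeartbeats 1000000 in
lemma Tt_add3 {a b c₁ c₂ : ℕ → ℂ} (ha : Summable fun k => ‖a k‖)
    (hb : Summable fun k => ‖b k‖) (h1 : Summable fun k => ‖c₁ k‖)
    (h2 : Summable fun k => ‖c₂ k‖) (n : ℕ) :
    Tt a b (fun j => c₁ j + c₂ j) n = Tt a b c₁ n + Tt a b c₂ n := by
  rw [Tt, Tt, Tt,
    ← Summable.tsum_add ((Tt_abs_summable ha hb h1 n).of_norm) ((Tt_abs_summable ha hb h2 n).of_norm)]
  apply tsum_congr
  intro p
  simp only [tri]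
  by_cases h : p.1 + p.2.2 = n + p.2.1
  · rw [if_pos h, if_pos h, if_pos h]; ring
  · rw [if_neg h, if_neg h, if_neg h]; ring

lemma Tt_smul1 (z : ℂ) (a b c : ℕ → ℂ) (n : ℕ) :
    Tt (fun j => z * a j) b c n = z * Tt a b c n := by
  rw [Tt, Tt, ← tsum_mul_left]
  apply tsum_congr
  intro p
  simp only [tri]
  by_cases h : p.1 + p.2.2 = n + p.2.1
  · rw [if_pos h, if_pos h]; ring
  · rw [if_neg h, if_neg h]; ring

lemma Tt_smul2 (r : ℝ) (a b c : ℕ → ℂ) (n : ℕ) :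
    Tt a (fun j => (r : ℂ) * b j) c n = (r : ℂ) * Tt a b c n := by
  rw [Tt, Tt, ← tsum_mul_left]
  apply tsum_congr
  intro p
  simp only [tri]
  by_cases h : p.1 + p.2.2 = n + p.2.1
  · rw [if_pos h, if_pos h, map_mul, Complex.conj_ofReal]; ring
  · rw [if_neg h, if_neg h]; ring

lemma Tt_smul3 (z : ℂ) (a b c : ℕ → ℂ) (n : ℕ) :
    Tt a b (fun j => z * c j) n = z * Tt a b c n := by
  rw [Tt, Tt, ← tsum_mul_left]
  apply tsum_congr
  intro p
  simp only [tri]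
  by_cases h : p.1 + p.2.2 = n + p.2.1
  · rw [if_pos h, if_pos h]; ring
  · rw [if_neg h, if_neg h]; ring

set_option maxHeartbeats 1000000 in
lemma Tt_expand {v h : ℕ → ℂ} (hv : Summable fun k => ‖v k‖)
    (hh : Summable fun k => ‖h k‖) (n : ℕ) :
    Tt (fun j => v j + h j) (fun j => v j + h j) (fun j => v j + h j) n
      = (Tt v v v n + Tt h v v n + Tt v h v n + Tt v v h n)
        + (Tt h h v n + Tt h v h n + Tt v h h n + Tt h h h n) := by
  have hvh : Summable fun k => ‖v k + h k‖ := l1_add hv hh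
  rw [Tt_add1 hv hh hvh hvh n]
  rw [Tt_add2 hv hv hh hvh n, Tt_add2 hh hv hh hvh n]
  rw [Tt_add3 hv hv hv hh n, Tt_add3 hv hh hv hh n,
    Tt_add3 hh hv hv hh n, Tt_add3 hh hh hv hh n]
  ring

noncomputable def Dmap (v : ℕ → ℂ) : (ℕ → ℂ) → ℕ → ℂ := fun h n =>
  (-4) * Complex.I * (Tt h v v n + Tt v h v n + Tt v v h n)

lemma norm_neg4I : ‖(-4 : ℂ) * Complex.I‖ = 4 := by
  rw [norm_mul, Complex.norm_I, mul_one, norm_neg]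
  simp

end St12


open St12

set_option maxHeartbeats 2000000 in
/-- Estimates on the auxiliary functional `F` and its Hamiltonian vector
field `X_F`: `F` is real valued with `|F(v)| ≲ ‖v‖⁴`, `‖X_F(v)‖ ≲ ‖v‖³`, and
`X_F` is differentiable with `‖dX_F(v)‖ ≲ ‖v‖²`. -/
theorem statement12 (s : ℝ) (hs : 1 / 2 < s) :
    ∃ C : ℝ, 0 < C ∧ ∀ v : ℕ → ℂ, InHs s v →
      (FfunSummable v ∧ (Ffun v).im = 0 ∧ ‖Ffun v‖ ≤ C * hsNorm s v ^ 4) ∧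
      (InHs s (XF v) ∧ hsNorm s (XF v) ≤ C * hsNorm s v ^ 3) ∧
      (∃ D : (ℕ → ℂ) → ℕ → ℂ, HasHsDerivAt s XF v D (C * hsNorm s v ^ 2)) := by
  have hA0 : 0 ≤ Ac s := Ac_nonneg s
  have h2s0 : (0:ℝ) ≤ 2 ^ s := Real.rpow_nonneg (by norm_num) s
  have hK0 : 0 ≤ 2 ^ s * Ac s ^ 2 := mul_nonneg h2s0 (sq_nonneg _)
  refine ⟨Ac s ^ 4 + 16 * (2 ^ s * Ac s ^ 2) + 1, by positivity, ?_⟩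
  intro v hv
  have hNv0 : 0 ≤ hsNorm s v := hsNorm_nonneg s v
  have l1v := L1fact hs hv
  have hSnn : 0 ≤ ∑' k, ‖v k‖ := tsum_nonneg (fun k => norm_nonneg _)
  constructor
  · -- part (i)
    refine ⟨ffunSummable_of_l1 l1v.1, ffun_real v, ?_⟩
    have hb := ffun_bound l1v.1
    have hS4 : (∑' k, ‖v k‖) ^ 4 ≤ (Ac s * hsNorm s v) ^ 4 :=
      pow_le_pow_left₀ hSnn l1v.2 4
    calc ‖Ffun v‖
        ≤ (1/4 : ℝ) * ((∑' k, ‖v k‖) * ((∑' k, ‖v k‖) * ((∑' k, ‖v k‖) * (∑' k, ‖v k‖)))) := hb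
      _ = (1/4) * (∑' k, ‖v k‖) ^ 4 := by ring
      _ ≤ (1/4) * (Ac s * hsNorm s v) ^ 4 := by linarith
      _ = (Ac s ^ 4 / 4) * hsNorm s v ^ 4 := by ring
      _ ≤ (Ac s ^ 4 + 16 * (2 ^ s * Ac s ^ 2) + 1) * hsNorm s v ^ 4 := by
          have h4 : (0:ℝ) ≤ hsNorm s v ^ 4 := by positivity
          have h5 : (0:ℝ) ≤ Ac s ^ 4 := by positivity
          nlinarith
  constructor
  · -- part (ii)
    have tb := Tt_bound hs hv hv hv
    have hXFc : ∀ n, XF v n = ((-4 : ℂ) * Complex.I) * Tt v v v n := fun n => rfl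
    refine ⟨InHs_congr (fun n => (hXFc n).symm) (InHs_smulC _ tb.1), ?_⟩
    have h1 : hsNorm s (XF v) = ‖(-4 : ℂ) * Complex.I‖ * hsNorm s (Tt v v v) := by
      rw [hsNorm_congr s hXFc]
      exact hsNorm_smulC s _ _
    rw [h1, norm_neg4I]
    have h2 := tb.2
    have h3 : (0:ℝ) ≤ hsNorm s (Tt v v v) := hsNorm_nonneg s _
    have h4 : (0:ℝ) ≤ hsNorm s v * hsNorm s v * hsNorm s v := by positivity
    have h5 : (0:ℝ) ≤ Ac s ^ 4 := by positivity
    nlinarith [mul_nonneg hK0 h4]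
  · -- part (iii)
    refine ⟨Dmap v, ?_, ?_, ?_, ?_⟩
    · intro h₁ h₂ hh₁ hh₂ k
      have s1 := (L1fact hs hh₁).1
      have s2 := (L1fact hs hh₂).1
      have sv := l1v.1
      simp only [Dmap]
      rw [Tt_add1 s1 s2 sv sv k, Tt_add2 sv s1 s2 sv k, Tt_add3 sv sv s1 s2 k]
      ring
    · intro c h hh k
      simp only [Dmap]
      rw [Tt_smul1 ((c:ℝ):ℂ) h v v k, Tt_smul2 c v h v k, Tt_smul3 ((c:ℝ):ℂ) v v h k]
      ring
    · intro h hh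
      have t1 := Tt_bound hs hh hv hv
      have t2 := Tt_bound hs hv hh hv
      have t3 := Tt_bound hs hv hv hh
      refine ⟨InHs_smulC ((-4 : ℂ) * Complex.I) (InHs_add (InHs_add t1.1 t2.1) t3.1), ?_⟩
      have e1 : hsNorm s (Dmap v h)
          = ‖(-4 : ℂ) * Complex.I‖
            * hsNorm s (fun n => Tt h v v n + Tt v h v n + Tt v v h n) := by
        exact hsNorm_smulC s _ _
      rw [e1, norm_neg4I]
      have htr : hsNorm s (fun n => Tt h v v n + Tt v h v n + Tt v v h n)
          ≤ hsNorm s (Tt h v v) + hsNorm s (Tt v h v) + hsNorm s (Tt v v h) := by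
        calc hsNorm s (fun n => Tt h v v n + Tt v h v n + Tt v v h n)
            ≤ hsNorm s (fun n => Tt h v v n + Tt v h v n) + hsNorm s (Tt v v h) :=
              hsNorm_add_le (InHs_add t1.1 t2.1) t3.1
          _ ≤ hsNorm s (Tt h v v) + hsNorm s (Tt v h v) + hsNorm s (Tt v v h) := by
              have := hsNorm_add_le t1.1 t2.1
              linarith
      have hNh0 : 0 ≤ hsNorm s h := hsNorm_nonneg s h
      have b1 := t1.2
      have b2 := t2.2
      have b3 := t3.2
      have hfac : (0:ℝ) ≤ (Ac s ^ 4 + 4 * (2 ^ s * Ac s ^ 2) + 1)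
          * (hsNorm s v * hsNorm s v * hsNorm s h) := by positivity
      linarith [htr, b1, b2, b3, hfac]
    · intro η hη
      have hden : (0:ℝ) < 12 * (2 ^ s * Ac s ^ 2) * hsNorm s v
          + 4 * (2 ^ s * Ac s ^ 2) + 1 := by positivity
      refine ⟨min 1 (η / (12 * (2 ^ s * Ac s ^ 2) * hsNorm s v
          + 4 * (2 ^ s * Ac s ^ 2) + 1)), lt_min one_pos (div_pos hη hden), ?_⟩
      intro h hh hsmall
      have sv := l1v.1
      have sh := (L1fact hs hh).1
      have hNh0 : 0 ≤ hsNorm s h := hsNorm_nonneg s h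
      have hid : ∀ k, XF (fun j => v j + h j) k - XF v k - Dmap v h k
          = ((-4 : ℂ) * Complex.I)
            * (Tt h h v k + Tt h v h k + Tt v h h k + Tt h h h k) := by
        intro k
        rw [XF_eq, XF_eq]
        simp only [Dmap]
        rw [Tt_expand sv sh k]
        ring
      have q1 := Tt_bound hs hh hh hv
      have q2 := Tt_bound hs hh hv hh
      have q3 := Tt_bound hs hv hh hh
      have q4 := Tt_bound hs hh hh hh
      have e1 : hsNorm s (fun k => XF (fun j => v j + h j) k - XF v k - Dmap v h k)
          = 4 * hsNorm s (fun k => Tt h h v k + Tt h v h k + Tt v h h k + Tt h h h k) := by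
        rw [hsNorm_congr s hid, ← norm_neg4I]
        exact hsNorm_smulC s _ _
      rw [e1]
      have htr : hsNorm s (fun k => Tt h h v k + Tt h v h k + Tt v h h k + Tt h h h k)
          ≤ hsNorm s (Tt h h v) + hsNorm s (Tt h v h) + hsNorm s (Tt v h h)
            + hsNorm s (Tt h h h) := by
        calc hsNorm s (fun k => Tt h h v k + Tt h v h k + Tt v h h k + Tt h h h k)
            ≤ hsNorm s (fun k => Tt h h v k + Tt h v h k + Tt v h h k)
              + hsNorm s (Tt h h h) :=
              hsNorm_add_le (InHs_add (InHs_add q1.1 q2.1) q3.1) q4.1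
          _ ≤ hsNorm s (fun k => Tt h h v k + Tt h v h k) + hsNorm s (Tt v h h)
              + hsNorm s (Tt h h h) := by
              have := hsNorm_add_le (InHs_add q1.1 q2.1) q3.1
              linarith
          _ ≤ hsNorm s (Tt h h v) + hsNorm s (Tt h v h) + hsNorm s (Tt v h h)
              + hsNorm s (Tt h h h) := by
              have := hsNorm_add_le q1.1 q2.1
              linarith
      have hNh1 : hsNorm s h ≤ 1 := le_of_lt (lt_of_lt_of_le hsmall (min_le_left _ _))
      have hNhr : hsNorm s h ≤ η / (12 * (2 ^ s * Ac s ^ 2) * hsNorm s v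
          + 4 * (2 ^ s * Ac s ^ 2) + 1) :=
        le_of_lt (lt_of_lt_of_le hsmall (min_le_right _ _))
      have hkey : hsNorm s h * (12 * (2 ^ s * Ac s ^ 2) * hsNorm s v
          + 4 * (2 ^ s * Ac s ^ 2) + 1) ≤ η := by
        rw [← le_div_iff₀ hden] at *
        exact hNhr
      have b1 := q1.2
      have b2 := q2.2
      have b3 := q3.2
      have b4 := q4.2
      nlinarith [mul_nonneg hNh0 hNh0, mul_nonneg (mul_nonneg hNh0 hNh0) hNh0,
        mul_nonneg hK0 (mul_nonneg hNh0 hNh0),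
        mul_nonneg (mul_nonneg hK0 hNv0) (mul_nonneg hNh0 hNh0),
        mul_nonneg hNh0 hNv0, hη.le,
        mul_le_mul_of_nonneg_left hkey hNh0,
        mul_le_mul_of_nonneg_left hNh1 (mul_nonneg hK0 (mul_nonneg hNh0 hNh0))]
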